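/- Let F denote the space of trilinear forms on V alternating and semi-basic in the last two arguments, let Λ³_v denote the space of alternating trilinear forms on V semi-basic in every argument, and for a linear map K : V → V let (τ_K C)(X,Y,Z) = C(KX,Y,Z) − C(KY,X,Z) + C(KZ,X,Y). Define τ : F ⊕ F → Λ³_v ⊕ Λ³_v ⊕ Λ³_v by τ(C₁, C₂) = (τ_J C₁, τ_h C₂, τ_h C₁ + τ_J C₂). Then τ is surjective. -/

import Mathlib

open Module

/-- Model of the tangent space of `J¹π` at a point: `V = ℝ^{n+1} × ℝ^n`, the first
factor spanned by the horizontal vectors `e_0, …, e_n` (`e_0` the time direction),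
the second by the vertical vectors `f_1, …, f_n` (here `f_k = fbase ⟨k-1,_⟩`). -/
abbrev Vv (n : ℕ) : Type := (Fin (n + 1) → ℝ) × (Fin n → ℝ)

/-- A vector of `V` is vertical if it lies in the span of `f_1, …, f_n`,
i.e. its first component vanishes. -/
def IsVert {n : ℕ} (v : Vv n) : Prop := v.1 = 0

/-- The vertical endomorphism `J : V → V`: `J e_0 = 0`, `J e_i = f_i` (1 ≤ i ≤ n),
`J f_i = 0`. -/
noncomputable def Jv (n : ℕ) : Vv n →ₗ[ℝ] Vv n :=
  LinearMap.prod 0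
    ((LinearMap.funLeft ℝ ℝ Fin.succ).comp (LinearMap.fst ℝ (Fin (n + 1) → ℝ) (Fin n → ℝ)))

/-- The horizontal projector `h : V → V`: `h e_α = e_α` (0 ≤ α ≤ n), `h f_i = 0`. -/
noncomputable def Hv (n : ℕ) : Vv n →ₗ[ℝ] Vv n :=
  LinearMap.prod (LinearMap.fst ℝ (Fin (n + 1) → ℝ) (Fin n → ℝ)) 0

set_option maxSynthPendingDepth 3
set_option synthInstance.maxHeartbeats 400000
set_option maxHeartbeats 2000000

/-- `F`: the space of trilinear forms on `V` that are alternating in the last two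
arguments and semi-basic in the last two arguments (model of `T* ⊗ Λ²T_v*`). -/
noncomputable def Fsub (n : ℕ) : Submodule ℝ (Vv n →ₗ[ℝ] Vv n →ₗ[ℝ] Vv n →ₗ[ℝ] ℝ) where
  carrier := { C | (∀ X Y Z, C X Y Z = - C X Z Y) ∧
    (∀ X v Z, IsVert v → C X v Z = 0) ∧
    (∀ X Y v, IsVert v → C X Y v = 0) }
  add_mem' := by
    rintro A B ⟨a1, a2, a3⟩ ⟨b1, b2, b3⟩
    refine ⟨fun X Y Z => ?_, fun X v Z hv => ?_, fun X Y v hv => ?_⟩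
    · simp only [LinearMap.add_apply]; rw [a1, b1]; ring
    · simp [a2 X v Z hv, b2 X v Z hv]
    · simp [a3 X Y v hv, b3 X Y v hv]
  zero_mem' := by
    refine ⟨fun X Y Z => ?_, fun X v Z hv => ?_, fun X Y v hv => ?_⟩ <;> simp
  smul_mem' := by
    rintro c A ⟨a1, a2, a3⟩
    refine ⟨fun X Y Z => ?_, fun X v Z hv => ?_, fun X Y v hv => ?_⟩
    · simp only [LinearMap.smul_apply, smul_eq_mul]; rw [a1]; ring
    · simp [a2 X v Z hv]
    · simp [a3 X Y v hv]

/-- `Λ³T_v*`: the space of alternating trilinear forms on `V` that are semi-basic in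
every argument. -/
noncomputable def Lv3 (n : ℕ) : Submodule ℝ (Vv n →ₗ[ℝ] Vv n →ₗ[ℝ] Vv n →ₗ[ℝ] ℝ) where
  carrier := { D | (∀ X Y Z, D X Y Z = - D Y X Z) ∧
    (∀ X Y Z, D X Y Z = - D X Z Y) ∧
    (∀ v Y Z, IsVert v → D v Y Z = 0) ∧
    (∀ X v Z, IsVert v → D X v Z = 0) ∧
    (∀ X Y v, IsVert v → D X Y v = 0) }
  add_mem' := by
    rintro A B ⟨a1, a2, a3, a4, a5⟩ ⟨b1, b2, b3, b4, b5⟩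
    refine ⟨fun X Y Z => ?_, fun X Y Z => ?_, fun v Y Z hv => ?_, fun X v Z hv => ?_,
      fun X Y v hv => ?_⟩
    · simp only [LinearMap.add_apply]; rw [a1, b1]; ring
    · simp only [LinearMap.add_apply]; rw [a2, b2]; ring
    · simp [a3 v Y Z hv, b3 v Y Z hv]
    · simp [a4 X v Z hv, b4 X v Z hv]
    · simp [a5 X Y v hv, b5 X Y v hv]
  zero_mem' := by
    refine ⟨fun X Y Z => ?_, fun X Y Z => ?_, fun v Y Z hv => ?_, fun X v Z hv => ?_,
      fun X Y v hv => ?_⟩ <;> simp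
  smul_mem' := by
    rintro c A ⟨a1, a2, a3, a4, a5⟩
    refine ⟨fun X Y Z => ?_, fun X Y Z => ?_, fun v Y Z hv => ?_, fun X v Z hv => ?_,
      fun X Y v hv => ?_⟩
    · simp only [LinearMap.smul_apply, smul_eq_mul]; rw [a1]; ring
    · simp only [LinearMap.smul_apply, smul_eq_mul]; rw [a2]; ring
    · simp [a3 v Y Z hv]
    · simp [a4 X v Z hv]
    · simp [a5 X Y v hv]

/-- The alternating operator `τ_K`:
`(τ_K C)(X,Y,Z) = C(KX,Y,Z) − C(KY,X,Z) + C(KZ,X,Y)`. -/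
noncomputable def tauF (n : ℕ) (K : Vv n →ₗ[ℝ] Vv n)
    (C : Vv n →ₗ[ℝ] Vv n →ₗ[ℝ] Vv n →ₗ[ℝ] ℝ) : Vv n → Vv n → Vv n → ℝ :=
  fun X Y Z => C (K X) Y Z - C (K Y) X Z + C (K Z) X Y


/-! ### Auxiliary constructions for the surjectivity proof -/

/-- The "index shift" map `ι : V → V`, `ι f_i = e_i`, `ι e_α = 0`. -/
noncomputable def iotaV (n : ℕ) : Vv n →ₗ[ℝ] Vv n :=
  LinearMap.prod
    ((LinearMap.pi (fun i : Fin (n+1) =>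
        (Fin.cases 0 (fun j => LinearMap.proj j) i : (Fin n → ℝ) →ₗ[ℝ] ℝ))).comp
      (LinearMap.snd ℝ (Fin (n + 1) → ℝ) (Fin n → ℝ)))
    0

/-- The time covector `θ : V → ℝ`, `θ X = X⁰`. -/
noncomputable def thetaV (n : ℕ) : Vv n →ₗ[ℝ] ℝ :=
  (LinearMap.proj 0).comp (LinearMap.fst ℝ (Fin (n + 1) → ℝ) (Fin n → ℝ))

/-- The time vector `e₀`. -/
noncomputable def e0V (n : ℕ) : Vv n := (Pi.single 0 1, 0)

lemma HH (n : ℕ) (X : Vv n) : Hv n (Hv n X) = Hv n X := rfl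
lemma HJ (n : ℕ) (X : Vv n) : Hv n (Jv n X) = 0 := rfl
lemma vert_sub_H (n : ℕ) (X : Vv n) : IsVert (X - Hv n X) := by
  simp [IsVert, Hv]
lemma theta_vert {n : ℕ} {v : Vv n} (hv : IsVert v) : thetaV n v = 0 := by
  have h : v.1 = 0 := hv
  simp [thetaV, h]
lemma H_vert {n : ℕ} {v : Vv n} (hv : IsVert v) : Hv n v = 0 := by
  have h : v.1 = 0 := hv
  refine Prod.ext ?_ rfl
  simpa [Hv] using h
lemma iotaH (n : ℕ) (X : Vv n) : iotaV n (Hv n X) = 0 := by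
  simp [iotaV, Hv]
lemma iotaJ (n : ℕ) (X : Vv n) :
    iotaV n (Jv n X) = Hv n X - thetaV n X • e0V n := by
  refine Prod.ext ?_ ?_
  · funext i
    refine Fin.cases ?_ (fun j => ?_) i
    · simp [iotaV, Jv, Hv, thetaV, e0V]
    · simp [iotaV, Jv, Hv, thetaV, e0V, Fin.succ_ne_zero]
  · simp [iotaV, Jv, Hv, thetaV, e0V]

/-- `τ_K` as a map of trilinear forms. -/
noncomputable def tauL (n : ℕ) (K : Vv n →ₗ[ℝ] Vv n)
    (C : Vv n →ₗ[ℝ] Vv n →ₗ[ℝ] Vv n →ₗ[ℝ] ℝ) :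
    Vv n →ₗ[ℝ] Vv n →ₗ[ℝ] Vv n →ₗ[ℝ] ℝ :=
  C.comp K - (C.comp K).flip + LinearMap.lflip.comp (C.comp K).flip

lemma tauL_apply (n : ℕ) (K : Vv n →ₗ[ℝ] Vv n)
    (C : Vv n →ₗ[ℝ] Vv n →ₗ[ℝ] Vv n →ₗ[ℝ] ℝ) (X Y Z : Vv n) :
    tauL n K C X Y Z = C (K X) Y Z - C (K Y) X Z + C (K Z) X Y := by
  simp [tauL, LinearMap.lflip]; rfl

/-- The antisymmetrized tensor `θ ∧ B`. -/
noncomputable def skw (n : ℕ) (B : Vv n →ₗ[ℝ] Vv n →ₗ[ℝ] ℝ) :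
    Vv n →ₗ[ℝ] Vv n →ₗ[ℝ] Vv n →ₗ[ℝ] ℝ where
  toFun X := (thetaV n).smulRight (B X) - (B X).smulRight (thetaV n)
  map_add' X X' := by
    refine LinearMap.ext fun Y => LinearMap.ext fun Z => ?_
    simp [mul_add, add_mul]
    ring
  map_smul' c X := by
    refine LinearMap.ext fun Y => LinearMap.ext fun Z => ?_
    simp
    ring

lemma skw_apply (n : ℕ) (B : Vv n →ₗ[ℝ] Vv n →ₗ[ℝ] ℝ) (X Y Z : Vv n) :
    skw n B X Y Z = thetaV n Y * B X Z - B X Y * thetaV n Z := by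
  simp [skw]

lemma dh1 {n : ℕ} {D : Vv n →ₗ[ℝ] Vv n →ₗ[ℝ] Vv n →ₗ[ℝ] ℝ} (hD : D ∈ Lv3 n)
    (X Y Z : Vv n) : D (Hv n X) Y Z = D X Y Z := by
  obtain ⟨-, -, p3, -, -⟩ := hD
  have h0 := p3 (X - Hv n X) Y Z (vert_sub_H n X)
  simp only [map_sub, LinearMap.sub_apply] at h0
  linarith

lemma dh2 {n : ℕ} {D : Vv n →ₗ[ℝ] Vv n →ₗ[ℝ] Vv n →ₗ[ℝ] ℝ} (hD : D ∈ Lv3 n)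
    (X Y Z : Vv n) : D X (Hv n Y) Z = D X Y Z := by
  obtain ⟨-, -, -, p4, -⟩ := hD
  have h0 := p4 X (Y - Hv n Y) Z (vert_sub_H n Y)
  simp only [map_sub, LinearMap.sub_apply] at h0
  linarith

lemma tau3 {n : ℕ} {D : Vv n →ₗ[ℝ] Vv n →ₗ[ℝ] Vv n →ₗ[ℝ] ℝ} (hD : D ∈ Lv3 n)
    (X Y Z : Vv n) :
    D (Hv n X) Y Z - D (Hv n Y) X Z + D (Hv n Z) X Y = 3 * D X Y Z := by
  obtain ⟨p1, p2, -, -, -⟩ := id hD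
  rw [dh1 hD, dh1 hD, dh1 hD]
  linarith [p1 X Y Z, p1 Z X Y, p2 X Z Y]

lemma comp_mem_Fsub {n : ℕ} {D : Vv n →ₗ[ℝ] Vv n →ₗ[ℝ] Vv n →ₗ[ℝ] ℝ}
    (hD : D ∈ Lv3 n) (K : Vv n →ₗ[ℝ] Vv n) : D.comp K ∈ Fsub n := by
  obtain ⟨-, p2, -, p4, p5⟩ := hD
  exact ⟨fun X Y Z => p2 (K X) Y Z, fun X v Z hv => p4 (K X) v Z hv,
    fun X Y v hv => p5 (K X) Y v hv⟩

lemma skw_mem_Fsub {n : ℕ} {B : Vv n →ₗ[ℝ] Vv n →ₗ[ℝ] ℝ}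
    (hB : ∀ X v, IsVert v → B X v = 0) : skw n B ∈ Fsub n := by
  refine ⟨fun X Y Z => ?_, fun X v Z hv => ?_, fun X Y v hv => ?_⟩
  · simp only [skw_apply]; ring
  · simp [skw_apply, theta_vert hv, hB X v hv]
  · simp [skw_apply, theta_vert hv, hB X v hv]

lemma tauL_H_mem {n : ℕ} {C : Vv n →ₗ[ℝ] Vv n →ₗ[ℝ] Vv n →ₗ[ℝ] ℝ}
    (hC : C ∈ Fsub n) : tauL n (Hv n) C ∈ Lv3 n := by
  obtain ⟨c1, c2, c3⟩ := hC
  refine ⟨fun X Y Z => ?_, fun X Y Z => ?_, fun v Y Z hv => ?_, fun X v Z hv => ?_,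
    fun X Y v hv => ?_⟩
  · simp only [tauL_apply]
    linarith [c1 (Hv n Z) X Y]
  · simp only [tauL_apply]
    linarith [c1 (Hv n X) Y Z]
  · simp [tauL_apply, H_vert hv, c2 (Hv n Y) v Z hv, c2 (Hv n Z) v Y hv]
  · simp [tauL_apply, H_vert hv, c2 (Hv n X) v Z hv, c3 (Hv n Z) X v hv]
  · simp [tauL_apply, H_vert hv, c3 (Hv n X) Y v hv, c3 (Hv n Y) X v hv]

/-- The map `τ : F ⊕ F → Λ³T_v* ⊕ Λ³T_v* ⊕ Λ³T_v*`,
`τ(C₁, C₂) = (τ_J C₁, τ_h C₂, τ_h C₁ + τ_J C₂)`, is surjective. -/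
theorem stmt6 (n : ℕ) (hn : 1 ≤ n) :
    ∀ D₁ ∈ Lv3 n, ∀ D₂ ∈ Lv3 n, ∀ D₃ ∈ Lv3 n,
      ∃ C₁ ∈ Fsub n, ∃ C₂ ∈ Fsub n,
        (∀ X Y Z, tauF n (Jv n) C₁ X Y Z = D₁ X Y Z) ∧
        (∀ X Y Z, tauF n (Hv n) C₂ X Y Z = D₂ X Y Z) ∧
        (∀ X Y Z, tauF n (Hv n) C₁ X Y Z + tauF n (Jv n) C₂ X Y Z = D₃ X Y Z) := by
  intro D₁ hD₁ D₂ hD₂ D₃ hD₃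
  obtain ⟨p1, p2, p3, p4, p5⟩ := hD₁
  -- the particular solution `C₀` with `τ_J C₀ = D₁`
  set B : Vv n →ₗ[ℝ] Vv n →ₗ[ℝ] ℝ := (D₁ (e0V n)).comp (iotaV n) with hB
  set C0 : Vv n →ₗ[ℝ] Vv n →ₗ[ℝ] Vv n →ₗ[ℝ] ℝ :=
    (3⁻¹ : ℝ) • (D₁.comp (iotaV n)) - (6⁻¹ : ℝ) • skw n B with hC0
  have hC0mem : C0 ∈ Fsub n := by
    refine sub_mem (Submodule.smul_mem _ _ (comp_mem_Fsub ⟨p1,p2,p3,p4,p5⟩ _))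
      (Submodule.smul_mem _ _ (skw_mem_Fsub ?_))
    intro X v hv
    simpa [hB] using p5 (e0V n) (iotaV n X) v hv
  set D' : Vv n →ₗ[ℝ] Vv n →ₗ[ℝ] Vv n →ₗ[ℝ] ℝ := D₃ - tauL n (Hv n) C0 with hD'
  have hD'mem : D' ∈ Lv3 n := sub_mem hD₃ (tauL_H_mem hC0mem)
  refine ⟨C0 + (3⁻¹ : ℝ) • (D'.comp (Hv n)), ?_, (3⁻¹ : ℝ) • (D₂.comp (Hv n)), ?_, ?_, ?_, ?_⟩
  · exact add_mem hC0mem (Submodule.smul_mem _ _ (comp_mem_Fsub hD'mem _))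
  · exact Submodule.smul_mem _ _ (comp_mem_Fsub hD₂ _)
  · -- τ_J C₁ = D₁
    intro X Y Z
    have dee : ∀ W, D₁ (e0V n) (e0V n) W = 0 := fun W => by
      have := p1 (e0V n) (e0V n) W; linarith
    have r1 : D₁ Y X Z = -D₁ X Y Z := by linarith [p1 X Y Z]
    have r2 : D₁ Z X Y = D₁ X Y Z := by linarith [p1 Z X Y, p2 X Z Y]
    have r3 : D₁ (e0V n) Y X = -D₁ (e0V n) X Y := by linarith [p2 (e0V n) X Y]
    have r4 : D₁ (e0V n) Z Y = -D₁ (e0V n) Y Z := by linarith [p2 (e0V n) Y Z]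
    have r5 : D₁ (e0V n) Z X = -D₁ (e0V n) X Z := by linarith [p2 (e0V n) X Z]
    simp only [tauF, hC0, hB, LinearMap.add_apply, LinearMap.sub_apply,
      LinearMap.smul_apply, smul_eq_mul, LinearMap.comp_apply, skw_apply,
      iotaJ, HJ, map_zero, LinearMap.zero_apply, map_sub, map_smul,
      dh1 ⟨p1,p2,p3,p4,p5⟩, dh2 ⟨p1,p2,p3,p4,p5⟩, dee, r1, r2, r3, r4, r5]
    ring
  · -- τ_h C₂ = D₂
    intro X Y Z
    have h3 := tau3 hD₂ X Y Z
    simp only [tauF, LinearMap.smul_apply, smul_eq_mul, LinearMap.comp_apply, HH]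
    linarith
  · -- τ_h C₁ + τ_J C₂ = D₃
    intro X Y Z
    have h3 := tau3 hD'mem X Y Z
    have hT : tauL n (Hv n) C0 X Y Z
        = C0 (Hv n X) Y Z - C0 (Hv n Y) X Z + C0 (Hv n Z) X Y := tauL_apply _ _ _ _ _ _
    have hDval : D' X Y Z = D₃ X Y Z - tauL n (Hv n) C0 X Y Z := by
      rw [hD']; simp only [LinearMap.sub_apply]
    simp only [tauF, LinearMap.add_apply, LinearMap.smul_apply, smul_eq_mul,
      LinearMap.comp_apply, HH, HJ, map_zero, LinearMap.zero_apply]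
    linarith [h3, hT, hDval]
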